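/- Let z₁,…,z_τ be vectors in ℝ^d and Σ a positive definite matrix such that the whitened vectors w_t = Σ^{-1/2} z_t satisfy inf_{‖v‖=1} max_{t∈[τ]} ⟨w_t, v⟩² ≥ 1 − ε for some ε ∈ (0,1). Then for every positive definite matrix A, max_{t∈[τ]} ‖z_t‖_A² ≥ (1 − ε)·λ₁(A)·λ_min(Σ). -/

import Mathlib

open Matrix

/-- `lam` is the largest eigenvalue of the matrix `A`. -/
def IsMaxEigenvalue {d : ℕ} (A : Matrix (Fin d) (Fin d) ℝ) (lam : ℝ) : Prop :=
  (∃ v : Fin d → ℝ, v ≠ 0 ∧ A *ᵥ v = lam • v) ∧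
    ∀ μ : ℝ, (∃ v : Fin d → ℝ, v ≠ 0 ∧ A *ᵥ v = μ • v) → μ ≤ lam

/-- `lam` is the smallest eigenvalue of the matrix `A`. -/
def IsMinEigenvalue {d : ℕ} (A : Matrix (Fin d) (Fin d) ℝ) (lam : ℝ) : Prop :=
  (∃ v : Fin d → ℝ, v ≠ 0 ∧ A *ᵥ v = lam • v) ∧
    ∀ μ : ℝ, (∃ v : Fin d → ℝ, v ≠ 0 ∧ A *ᵥ v = μ • v) → lam ≤ μ

lemma symm_dot' {d : ℕ} {M : Matrix (Fin d) (Fin d) ℝ} (hM : Mᵀ = M) (x y : Fin d → ℝ) :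
    x ⬝ᵥ M *ᵥ y = y ⬝ᵥ M *ᵥ x := by
  rw [dotProduct_mulVec, ← vecMul_transpose, hM, dotProduct_comm]

lemma dot_self_pos' {d : ℕ} {v : Fin d → ℝ} (hv : v ≠ 0) : 0 < v ⬝ᵥ v := by
  simpa using dotProduct_self_star_pos_iff.mpr hv

lemma cs_psd' {d : ℕ} {M : Matrix (Fin d) (Fin d) ℝ} (hM : M.PosSemidef) (x y : Fin d → ℝ) :
    (x ⬝ᵥ M *ᵥ y) ^ 2 ≤ (x ⬝ᵥ M *ᵥ x) * (y ⬝ᵥ M *ᵥ y) := by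
  have hsymm : Mᵀ = M := hM.1
  have key : ∀ t : ℝ, 0 ≤ (y ⬝ᵥ M *ᵥ y) * (t * t) + (2 * (x ⬝ᵥ M *ᵥ y)) * t + (x ⬝ᵥ M *ᵥ x) := by
    intro t
    have h0 : 0 ≤ (x + t • y) ⬝ᵥ M *ᵥ (x + t • y) := by simpa using hM.dotProduct_mulVec_nonneg (x + t • y)
    have hyx : y ⬝ᵥ M *ᵥ x = x ⬝ᵥ M *ᵥ y := symm_dot' hsymm y x
    simp only [mulVec_add, mulVec_smul, dotProduct_add, add_dotProduct, dotProduct_smul,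
      smul_dotProduct, smul_eq_mul, hyx] at h0
    nlinarith [h0]
  have hd := discrim_le_zero key
  unfold discrim at hd
  nlinarith [hd]

lemma rayleigh_min' {d : ℕ} {M : Matrix (Fin d) (Fin d) ℝ} (hM : M.IsHermitian) (c : ℝ)
    (h : ∀ μ : ℝ, (∃ v : Fin d → ℝ, v ≠ 0 ∧ M *ᵥ v = μ • v) → c ≤ μ) (x : Fin d → ℝ) :
    c * (x ⬝ᵥ x) ≤ x ⬝ᵥ M *ᵥ x := by
  set N : Matrix (Fin d) (Fin d) ℝ := M - c • 1 with hNdef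
  have hNh : N.IsHermitian := hM.sub (by simp [Matrix.IsHermitian, conjTranspose_smul])
  have hNmv : ∀ v : Fin d → ℝ, N *ᵥ v = M *ᵥ v - c • v := by
    intro v; simp [hNdef, sub_mulVec, smul_mulVec, one_mulVec]
  have hpsd : N.PosSemidef := by
    refine hNh.posSemidef_iff_eigenvalues_nonneg.mpr fun i => ?_
    show 0 ≤ hNh.eigenvalues i
    set u : Fin d → ℝ := ⇑(hNh.eigenvectorBasis i) with hu
    have hv : N *ᵥ u = hNh.eigenvalues i • u := hNh.mulVec_eigenvectorBasis i
    have hvne : u ≠ 0 := by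
      have h2 := hNh.eigenvectorBasis.orthonormal.ne_zero i
      intro hcon
      exact h2 (by ext j; exact congrFun hcon j)
    have h1 := hNmv u
    rw [hv] at h1
    have hMv : M *ᵥ u = (hNh.eigenvalues i + c) • u := by
      rw [add_smul, h1]; abel
    have := h (hNh.eigenvalues i + c) ⟨u, hvne, hMv⟩
    linarith
  have hp := hpsd.dotProduct_mulVec_nonneg x
  simp only [star_trivial] at hp
  have hx : x ⬝ᵥ N *ᵥ x = x ⬝ᵥ M *ᵥ x - c * (x ⬝ᵥ x) := by
    rw [hNmv, dotProduct_sub, dotProduct_smul, smul_eq_mul]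
  rw [hx] at hp
  linarith

/-- if the whitened vectors `w_t = Σ^{-1/2} z_t` satisfy
`inf_{‖v‖=1} max_t ⟨w_t, v⟩² ≥ 1 − ε`, then for every positive definite `A`,
`max_t ‖z_t‖_A² ≥ (1 − ε) λ₁(A) λ_min(Σ)`. Here `S` is the positive definite square root
of `Σ`. -/
theorem stmt10 {d τ : ℕ} (z : Fin τ → (Fin d → ℝ))
    (Sig S : Matrix (Fin d) (Fin d) ℝ) (hSig : Sig.PosDef) (hS : S.PosDef)
    (hSsq : S * S = Sig) (ε : ℝ) (hε : ε ∈ Set.Ioo (0 : ℝ) 1)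
    (hgood : ∀ v : Fin d → ℝ, v ⬝ᵥ v = 1 →
      ∃ t : Fin τ, ((S⁻¹ *ᵥ z t) ⬝ᵥ v) ^ 2 ≥ 1 - ε)
    (A : Matrix (Fin d) (Fin d) ℝ) (hA : A.PosDef)
    (lamA lamSig : ℝ) (hlamA : IsMaxEigenvalue A lamA)
    (hlamSig : IsMinEigenvalue Sig lamSig) :
    ∃ t : Fin τ, z t ⬝ᵥ A *ᵥ z t ≥ (1 - ε) * lamA * lamSig := by
  obtain ⟨u, hu0, huA⟩ := hlamA.1
  have huu : 0 < u ⬝ᵥ u := dot_self_pos' hu0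
  -- lamA > 0
  have huAu : u ⬝ᵥ A *ᵥ u = lamA * (u ⬝ᵥ u) := by rw [huA, dotProduct_smul, smul_eq_mul]
  have hApos : 0 < u ⬝ᵥ A *ᵥ u := by simpa using hA.dotProduct_mulVec_pos hu0
  have hlamApos : 0 < lamA := by
    by_contra hcon
    push_neg at hcon
    nlinarith
  -- lamSig > 0
  have hlamSigpos : 0 < lamSig := by
    obtain ⟨p, hp0, hpE⟩ := hlamSig.1
    have hpp : 0 < p ⬝ᵥ p := dot_self_pos' hp0
    have h1 : p ⬝ᵥ Sig *ᵥ p = lamSig * (p ⬝ᵥ p) := by rw [hpE, dotProduct_smul, smul_eq_mul]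
    have h2 : 0 < p ⬝ᵥ Sig *ᵥ p := by simpa using hSig.dotProduct_mulVec_pos hp0
    nlinarith
  have hSt : Sᵀ = S := by
    have := hS.1
    rwa [Matrix.IsHermitian, conjTranspose_eq_transpose_of_trivial] at this
  -- w = S u
  set w : Fin d → ℝ := S *ᵥ u with hwdef
  have hww : w ⬝ᵥ w = u ⬝ᵥ Sig *ᵥ u := by
    rw [hwdef, symm_dot' hSt (S *ᵥ u) u, mulVec_mulVec, hSsq]
  have hwSig : lamSig * (u ⬝ᵥ u) ≤ u ⬝ᵥ Sig *ᵥ u :=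
    rayleigh_min' hSig.1 lamSig hlamSig.2 u
  have hwwpos : 0 < w ⬝ᵥ w := by
    rw [hww]; simpa using hSig.dotProduct_mulVec_pos hu0
  set c : ℝ := Real.sqrt (w ⬝ᵥ w) with hcdef
  have hcpos : 0 < c := Real.sqrt_pos.mpr hwwpos
  have hc2 : c * c = w ⬝ᵥ w := Real.mul_self_sqrt hwwpos.le
  set v : Fin d → ℝ := c⁻¹ • w with hvdef
  have hv1 : v ⬝ᵥ v = 1 := by
    rw [hvdef, smul_dotProduct, dotProduct_smul, smul_eq_mul, smul_eq_mul, ← hc2]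
    field_simp
  obtain ⟨t, ht⟩ := hgood v hv1
  refine ⟨t, ?_⟩
  -- (S⁻¹ z t) ⬝ w = z t ⬝ u
  have hSinvT : (S⁻¹)ᵀ = S⁻¹ := by rw [transpose_nonsing_inv, hSt]
  have hSunit : IsUnit S.det := by
    have := hS.det_pos
    exact isUnit_iff_ne_zero.mpr this.ne'
  have hdot : (S⁻¹ *ᵥ z t) ⬝ᵥ w = z t ⬝ᵥ u := by
    rw [hwdef, dotProduct_comm, symm_dot' hSinvT (S *ᵥ u) (z t), mulVec_mulVec,
      nonsing_inv_mul S hSunit, one_mulVec]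
  have hvdot : (S⁻¹ *ᵥ z t) ⬝ᵥ v = c⁻¹ * (z t ⬝ᵥ u) := by
    rw [hvdef, dotProduct_smul, smul_eq_mul, hdot]
  rw [hvdot] at ht
  -- (z t ⬝ u)^2 ≥ (1-ε) * (w ⬝ w)
  have hzu2 : (z t ⬝ᵥ u) ^ 2 ≥ (1 - ε) * (w ⬝ᵥ w) := by
    have hcsq : c ^ 2 = w ⬝ᵥ w := by rw [sq]; exact hc2
    have h1 : (c⁻¹ * (z t ⬝ᵥ u)) ^ 2 = (z t ⬝ᵥ u) ^ 2 / (w ⬝ᵥ w) := by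
      rw [mul_pow, inv_pow, hcsq, inv_mul_eq_div]
    rw [h1, ge_iff_le, le_div_iff₀ hwwpos] at ht
    linarith [ht]
  -- Cauchy-Schwarz with A
  have hcs : (z t ⬝ᵥ A *ᵥ u) ^ 2 ≤ (z t ⬝ᵥ A *ᵥ z t) * (u ⬝ᵥ A *ᵥ u) :=
    cs_psd' hA.posSemidef (z t) u
  have hzAu : z t ⬝ᵥ A *ᵥ u = lamA * (z t ⬝ᵥ u) := by rw [huA, dotProduct_smul, smul_eq_mul]
  rw [hzAu, huAu, mul_pow] at hcs
  -- combine
  have hε1 : (0:ℝ) < 1 - ε := by linarith [hε.2]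
  have hkey : (1 - ε) * lamSig * (u ⬝ᵥ u) ≤ (z t ⬝ᵥ u) ^ 2 := by
    calc (1 - ε) * lamSig * (u ⬝ᵥ u) ≤ (1 - ε) * (u ⬝ᵥ Sig *ᵥ u) := by nlinarith
    _ ≤ (1 - ε) * (w ⬝ᵥ w) := by rw [hww]
    _ ≤ (z t ⬝ᵥ u) ^ 2 := hzu2
  nlinarith [hcs, hkey, mul_pos hlamApos huu, sq_nonneg (z t ⬝ᵥ u)]
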